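/- Let P be a field and H a finite-dimensional (as a P-vector space) associative unital P-algebra, not necessarily commutative. Then H is geometrically noetherian: for every n : ℕ and every set T ⊆ FreeAlgebra P (Fin n), there exists a finite subset T₀ ⊆ T such that for every μ : Fin n → H, if (FreeAlgebra.lift P μ) g = 0 for all g ∈ T₀, then (FreeAlgebra.lift P μ) g = 0 for all g ∈ T. -/

import Mathlib

universe u v

open TensorProduct

/-- a finite-dimensional associative unital `P`-algebra is
geometrically noetherian: every system of equations over a free associative
algebra is equivalent over `H` to a finite subsystem. -/
theorem finiteDimensional_geometrically_noetherian (P : Type u) [Field P]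
    (H : Type v) [Ring H] [Algebra P H] [FiniteDimensional P H]
    (n : ℕ) (T : Set (FreeAlgebra P (Fin n))) :
    ∃ T₀ : Finset (FreeAlgebra P (Fin n)), ↑T₀ ⊆ T ∧
      ∀ μ : Fin n → H,
        (∀ g ∈ T₀, (FreeAlgebra.lift P μ) g = 0) →
        ∀ g ∈ T, (FreeAlgebra.lift P μ) g = 0 := by
  classical
  set d := Module.finrank P H with hd
  set b := Module.finBasis P H with hb
  set R := MvPolynomial (Fin n × Fin d) P with hR
  let ν : Fin n → R ⊗[P] H := fun i => ∑ j, MvPolynomial.X (i, j) ⊗ₜ[P] b j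
  let Φ : FreeAlgebra P (Fin n) →ₐ[P] R ⊗[P] H := FreeAlgebra.lift P ν
  let B : Module.Basis (Fin d) R (R ⊗[P] H) := b.baseChange R
  let S : FreeAlgebra P (Fin n) → Fin d → R := fun g j => B.repr (Φ g) j
  -- key evaluation lemma
  have key : ∀ μ : Fin n → H, ∀ g : FreeAlgebra P (Fin n),
      (FreeAlgebra.lift P μ) g =
        ∑ j, (MvPolynomial.aeval fun p : Fin n × Fin d => b.repr (μ p.1) p.2 : R →ₐ[P] P)
          (S g j) • b j := by
    intro μ g
    set ev : R →ₐ[P] P :=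
      MvPolynomial.aeval fun p : Fin n × Fin d => b.repr (μ p.1) p.2 with hev
    let f : R →ₐ[P] H := (Algebra.ofId P H).comp ev
    have hcomm : ∀ (x : R) (y : H), Commute (f x) y := by
      intro x y
      exact (Algebra.commutes (ev x) y : _)
    let ψ : R ⊗[P] H →ₐ[P] H := Algebra.TensorProduct.lift f (AlgHom.id P H) hcomm
    -- Claim B : ψ x = ∑ j, ev (B.repr x j) • b j
    have claimB : ∀ x : R ⊗[P] H, ψ x = ∑ j, ev (B.repr x j) • b j := by
      intro x
      induction x using TensorProduct.induction_on with
      | zero => simp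
      | tmul r h =>
        have h1 : ψ (r ⊗ₜ[P] h) = ev r • h := by
          simp [ψ, Algebra.TensorProduct.lift_tmul, f, Algebra.ofId_apply,
            Algebra.smul_def]
          rfl
        rw [h1]
        have h2 : ∀ j, B.repr (r ⊗ₜ[P] h) j = b.repr h j • r := by
          intro j; simp [B]
        simp only [h2, map_smul, smul_eq_mul]
        calc ev r • h = ev r • ∑ x, b.repr h x • b x := by rw [b.sum_repr]
          _ = ∑ x, (b.repr h x * ev r) • b x := by
              rw [Finset.smul_sum]
              exact Finset.sum_congr rfl (fun x _ => by rw [smul_smul, mul_comm])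
      | add x y hx hy =>
        simp [map_add, hx, hy, Finset.sum_add_distrib, add_smul]
    -- Claim A : ψ ∘ Φ = lift μ
    have claimA : (ψ.comp Φ) = FreeAlgebra.lift P μ := by
      apply FreeAlgebra.hom_ext
      funext i
      simp only [AlgHom.comp_apply, Function.comp_apply]
      rw [show (FreeAlgebra.lift P μ) (FreeAlgebra.ι P i) = μ i from
        FreeAlgebra.lift_ι_apply μ i]
      show ψ (Φ (FreeAlgebra.ι P i)) = μ i
      rw [show Φ (FreeAlgebra.ι P i) = ν i from FreeAlgebra.lift_ι_apply ν i]
      simp only [ν, map_sum]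
      have : ∀ j, ψ (MvPolynomial.X (i, j) ⊗ₜ[P] b j) = b.repr (μ i) j • b j := by
        intro j
        simp only [ψ, Algebra.TensorProduct.lift_tmul, AlgHom.coe_comp, f,
          Function.comp_apply, Algebra.ofId_apply, AlgHom.coe_id, id_eq, ev,
          MvPolynomial.aeval_X, Algebra.smul_def]
        congr 1
        exact congrArg (· * b j) (congrArg (algebraMap P H) (MvPolynomial.aeval_X _ (i, j)))
      simp only [this]
      exact b.sum_repr (μ i)
    calc (FreeAlgebra.lift P μ) g = ψ (Φ g) := by rw [← claimA]; rfl
      _ = ∑ j, ev (B.repr (Φ g) j) • b j := claimB _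
      _ = ∑ j, ev (S g j) • b j := rfl
  -- noetherian extraction
  let Sall : Set R := ⋃ g ∈ T, Set.range (S g)
  have : IsNoetherianRing R := inferInstance
  obtain ⟨F, hF⟩ := (IsNoetherian.noetherian (Ideal.span Sall))
  -- each element of F lies in span of a finite subset of Sall
  have hmem : ∀ x ∈ F, ∃ U : Finset R, ↑U ⊆ Sall ∧ x ∈ Ideal.span (U : Set R) := by
    intro x hx
    have : x ∈ Ideal.span Sall := by
      rw [← hF]; exact Ideal.subset_span hx
    obtain ⟨U, hU1, hU2⟩ := Submodule.mem_span_finite_of_mem_span this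
    exact ⟨U, hU1, hU2⟩
  choose Uf hUf1 hUf2 using hmem
  let U : Finset R := F.attach.biUnion (fun x => Uf x.1 x.2)
  have hUsub : (U : Set R) ⊆ Sall := by
    intro u hu
    simp only [U, Finset.coe_biUnion, Set.mem_iUnion] at hu
    obtain ⟨x, hx, hu⟩ := hu
    exact hUf1 x.1 x.2 hu
  have hspan : Ideal.span Sall ≤ Ideal.span (U : Set R) := by
    rw [← hF]
    rw [Submodule.span_le]
    intro x hx
    have hx' : x ∈ F := hx
    have hsub : (Uf x hx' : Set R) ⊆ (U : Set R) := by
      intro u hu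
      simp only [U, Finset.coe_biUnion, Set.mem_iUnion]
      exact ⟨⟨x, hx'⟩, Finset.mem_attach _ _, hu⟩
    exact Ideal.span_mono hsub (hUf2 x hx')
  -- choose g's
  have hchoice : ∀ u ∈ U, ∃ g ∈ T, ∃ j, S g j = u := by
    intro u hu
    have := hUsub hu
    simp only [Sall, Set.mem_iUnion, Set.mem_range] at this
    obtain ⟨g, hg, j, hj⟩ := this
    exact ⟨g, hg, j, hj⟩
  choose gch hgchT jch hjch using hchoice
  refine ⟨U.attach.image (fun u => gch u.1 u.2), ?_, ?_⟩
  · intro g hg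
    simp only [Finset.coe_image, Set.mem_image, Finset.mem_coe, Finset.mem_attach] at hg
    obtain ⟨u, _, rfl⟩ := hg
    exact hgchT u.1 u.2
  · intro μ hμ g hgT
    set ev : R →ₐ[P] P :=
      MvPolynomial.aeval fun p : Fin n × Fin d => b.repr (μ p.1) p.2 with hev
    have evzero : ∀ g' ∈ U.attach.image (fun u => gch u.1 u.2), ∀ j, ev (S g' j) = 0 := by
      intro g' hg' j
      have h0 := hμ g' hg'
      rw [key μ g'] at h0
      have := Fintype.linearIndependent_iff.mp b.linearIndependent
        (fun j => ev (S g' j)) h0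
      exact this j
    -- span U ≤ ker ev
    have hker : Ideal.span (U : Set R) ≤ RingHom.ker ev.toRingHom := by
      rw [Ideal.span_le]
      intro u hu
      have hu' : u ∈ U := hu
      have : ev (S (gch u hu') (jch u hu')) = 0 := by
        apply evzero
        exact Finset.mem_image.mpr ⟨⟨u, hu'⟩, Finset.mem_attach _ _, rfl⟩
      rw [hjch u hu'] at this
      exact this
    rw [key μ g]
    have : ∀ j, ev (S g j) = 0 := by
      intro j
      have hin : S g j ∈ Ideal.span Sall := by
        apply Ideal.subset_span
        simp only [Sall, Set.mem_iUnion, Set.mem_range]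
        exact ⟨g, hgT, j, rfl⟩
      exact hker (hspan hin)
    exact Finset.sum_eq_zero (fun j _ => by have h := this j; rw [hev] at h; rw [h, zero_smul])
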